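/- Let b be a rational function in the closed unit ball of H∞ with ‖b‖∞ = 1 that is not a finite Blaschke product, with pythagorean mate a whose set of zeros on T is Z_T(a) = {ξ₁,…,ξ_n}. Let φ : D → D be analytic. If the composition operator C_φ is bounded on H(b), then for every j ∈ {1,…,n} the non-tangential limit φ(ξ_j) belongs to D ∪ Z_T(a). -/

import Mathlib

open Complex MeasureTheory Set Filter

noncomputable section

attribute [local instance] Classical.propDecidable

/-- The open unit disk in `ℂ`. -/
def unitDisk : Set ℂ := Metric.ball 0 1

/-- The unit circle in `ℂ`. -/
def unitCircle : Set ℂ := Metric.sphere 0 1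

/-- Membership in `H^∞`: analytic and bounded on the unit disk. -/
def MemHinf (f : ℂ → ℂ) : Prop :=
  DifferentiableOn ℂ f unitDisk ∧ ∃ C : ℝ, ∀ z ∈ unitDisk, ‖f z‖ ≤ C

/-- Membership in the closed unit ball of `H^∞`. -/
def MemBallHinf (f : ℂ → ℂ) : Prop :=
  DifferentiableOn ℂ f unitDisk ∧ ∀ z ∈ unitDisk, ‖f z‖ ≤ 1

/-- `f` agrees on the closed unit disk with a rational function without poles there. -/
def IsRationalOnDisk (f : ℂ → ℂ) : Prop :=
  ∃ P Q : Polynomial ℂ, ∀ z ∈ Metric.closedBall (0:ℂ) 1,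
    Q.eval z ≠ 0 ∧ f z = P.eval z / Q.eval z

/-- `f` is a finite Blaschke product (multiplicities are encoded by repetition). -/
def IsFiniteBlaschke (f : ℂ → ℂ) : Prop :=
  ∃ (γ : ℂ) (k : ℕ) (lam : Fin k → ℂ), ‖γ‖ = 1 ∧ (∀ i, lam i ∈ unitDisk) ∧
    ∀ z ∈ unitDisk, f z = γ * ∏ i, (z - lam i) / (1 - (starRingEnd ℂ) (lam i) * z)

/-- The `k`-th Taylor coefficient of `f` at the origin. -/
def taylorCoeff (f : ℂ → ℂ) (k : ℕ) : ℂ := iteratedDeriv k f 0 / k.factorial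

/-- Membership in the Hardy space `H²` (square-summable Taylor coefficients). -/
def MemH2 (f : ℂ → ℂ) : Prop :=
  DifferentiableOn ℂ f unitDisk ∧ Summable fun k => ‖taylorCoeff f k‖ ^ 2

/-- The squared `H²` norm. -/
def h2NormSq (f : ℂ → ℂ) : ℝ := ∑' k, ‖taylorCoeff f k‖ ^ 2

/-- The `H²` inner product. -/
def h2Inner (f g : ℂ → ℂ) : ℂ :=
  ∑' k, (starRingEnd ℂ) (taylorCoeff f k) * taylorCoeff g k

/-- The polynomial `a₁(z) = ∏ⱼ (z − ξⱼ)^{mⱼ}`. -/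
def a1fun {n : ℕ} (ξ : Fin n → ℂ) (m : Fin n → ℕ) : ℂ → ℂ :=
  fun z => ∏ j, (z - ξ j) ^ (m j)

/-- A decomposition `f = a₁ g + q` with `g ∈ H²`, `deg q ≤ N − 1`, witnessing membership
in `H(b) = a₁H² ⊕ P_{N−1}`. -/
def HbDecompOf {n : ℕ} (ξ : Fin n → ℂ) (m : Fin n → ℕ)
    (f g : ℂ → ℂ) (q : Polynomial ℂ) : Prop :=
  MemH2 g ∧ q.degree < ((∑ j, m j : ℕ) : WithBot ℕ) ∧
    ∀ z ∈ unitDisk, f z = a1fun ξ m z * g z + q.eval z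

/-- Membership in `H(b) = a₁ H² ⊕ P_{N−1}` (description of `H(b)` for `b` rational,
not a finite Blaschke product, whose pythagorean mate has boundary zeros `ξ` with
multiplicities `m`). -/
def MemHb {n : ℕ} (ξ : Fin n → ℂ) (m : Fin n → ℕ) (f : ℂ → ℂ) : Prop :=
  ∃ gq : (ℂ → ℂ) × Polynomial ℂ, HbDecompOf ξ m f gq.1 gq.2

/-- The (unique) decomposition of a member of `H(b)`. -/
def hbDecomp {n : ℕ} (ξ : Fin n → ℂ) (m : Fin n → ℕ) (f : ℂ → ℂ) :
    (ℂ → ℂ) × Polynomial ℂ :=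
  if h : MemHb ξ m f then h.choose else (0, 0)

/-- The squared norm `⦀a₁g + q⦀² = ‖g‖²_{H²} + ‖q‖²_{H²}` on `H(b)`. -/
def hbNormSq {n : ℕ} (ξ : Fin n → ℂ) (m : Fin n → ℕ) (f : ℂ → ℂ) : ℝ :=
  h2NormSq (hbDecomp ξ m f).1 + h2NormSq fun z => ((hbDecomp ξ m f).2).eval z

/-- The inner product on `H(b)` induced by the decomposition. -/
def hbInner {n : ℕ} (ξ : Fin n → ℂ) (m : Fin n → ℕ) (f g : ℂ → ℂ) : ℂ :=
  h2Inner (hbDecomp ξ m f).1 (hbDecomp ξ m g).1 +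
    h2Inner (fun z => ((hbDecomp ξ m f).2).eval z)
      (fun z => ((hbDecomp ξ m g).2).eval z)

/-- The Stolz angle (non-tangential approach region) at a boundary point `ξ`. -/
def stolzAngle (ξ : ℂ) (M : ℝ) : Set ℂ := {z ∈ unitDisk | ‖z - ξ‖ ≤ M * (1 - ‖z‖)}

/-- `f` has non-tangential limit `L` at `ξ`. -/
def NTLimit (f : ℂ → ℂ) (ξ L : ℂ) : Prop :=
  ∀ M : ℝ, 1 < M → Tendsto f (nhdsWithin ξ (stolzAngle ξ M)) (nhds L)

/-- Radial boundary value of `f` at `ζ` (junk value if the radial limit does not exist). -/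
def bdryVal (f : ℂ → ℂ) (ζ : ℂ) : ℂ :=
  limUnder (nhdsWithin (1:ℝ) (Set.Iio 1)) fun r : ℝ => f ((r : ℂ) * ζ)

/-- The full setting: `b` is a rational function in the closed unit ball of `H^∞` with
`‖b‖_∞ = 1` which is not a finite Blaschke product; `a` is its pythagorean mate (rational,
outer — i.e. zero-free on the disk —, `a(0) > 0`, `|a|² + |b|² = 1` on the circle); the
`ξ j` are the distinct zeros of `a` on the unit circle, with multiplicities `m j`. -/
structure RationalSetting (b a : ℂ → ℂ) (n : ℕ) (ξ : Fin n → ℂ) (m : Fin n → ℕ) :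
    Prop where
  b_diff : DifferentiableOn ℂ b unitDisk
  b_rat : IsRationalOnDisk b
  b_le_one : ∀ z ∈ unitDisk, ‖b z‖ ≤ 1
  b_norm_one : sSup ((fun z => ‖b z‖) '' unitDisk) = 1
  b_not_fbp : ¬ IsFiniteBlaschke b
  a_diff : DifferentiableOn ℂ a unitDisk
  a_rat : IsRationalOnDisk a
  a_outer : ∀ z ∈ unitDisk, a z ≠ 0
  a_zero_pos : 0 < (a 0).re ∧ (a 0).im = 0
  pyth : ∀ ζ ∈ unitCircle, ‖a ζ‖ ^ 2 + ‖b ζ‖ ^ 2 = 1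
  zeros_mem : ∀ j, ξ j ∈ unitCircle
  zeros_inj : Function.Injective ξ
  mult_pos : ∀ j, 0 < m j
  factor : ∃ g : ℂ → ℂ, IsRationalOnDisk g ∧ (∀ ζ ∈ unitCircle, g ζ ≠ 0) ∧
    ∀ z ∈ Metric.closedBall (0:ℂ) 1, a z = a1fun ξ m z * g z

/-- The composition operator `C_φ` maps `H(b)` into itself and is bounded there
(with respect to the equivalent norm `⦀·⦀_b`). -/
def CompBddHb {n : ℕ} (ξ : Fin n → ℂ) (m : Fin n → ℕ) (φ : ℂ → ℂ) : Prop :=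
  (∀ f, MemHb ξ m f → MemHb ξ m fun z => f (φ z)) ∧
  ∃ C : ℝ, ∀ f, MemHb ξ m f →
    hbNormSq ξ m (fun z => f (φ z)) ≤ C * hbNormSq ξ m f

/-- The composition operator `C_φ` is compact on `H(b)`: it is bounded and the image of
every sequence in the unit ball has a subsequence whose image converges in `H(b)`. -/
def CompCompactHb {n : ℕ} (ξ : Fin n → ℂ) (m : Fin n → ℕ) (φ : ℂ → ℂ) : Prop :=
  CompBddHb ξ m φ ∧
  ∀ f : ℕ → ℂ → ℂ, (∀ k, MemHb ξ m (f k) ∧ hbNormSq ξ m (f k) ≤ 1) →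
    ∃ (κ : ℕ → ℕ) (g : ℂ → ℂ), StrictMono κ ∧ MemHb ξ m g ∧
      Tendsto (fun i => hbNormSq ξ m fun z => f (κ i) (φ z) - g z) atTop (nhds 0)

/-- The composition operator `C_φ` is Hilbert–Schmidt on `H(b)`: it is bounded and the sum
of `⦀C_φ e⦀²` over the orthonormal basis `{a₁ z^k}ₖ ∪ {z^j}_{j<N}` of
`(H(b), ⦀·⦀_b)` is finite (the finite part of the sum being automatically finite). -/
def CompHSHb {n : ℕ} (ξ : Fin n → ℂ) (m : Fin n → ℕ) (φ : ℂ → ℂ) : Prop :=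
  CompBddHb ξ m φ ∧
  Summable fun k : ℕ => hbNormSq ξ m fun z => a1fun ξ m (φ z) * φ z ^ k

/-- The weighted composition operator `W_{u,φ} f = u · (f ∘ φ)` maps `H²` boundedly
into itself. -/
def WCompBddH2 (u φ : ℂ → ℂ) : Prop :=
  (∀ f, MemH2 f → MemH2 fun z => u z * f (φ z)) ∧
  ∃ C : ℝ, ∀ f, MemH2 f →
    h2NormSq (fun z => u z * f (φ z)) ≤ C * h2NormSq f

/-- The weighted composition operator `W_{u,φ}` is compact on `H²`. -/
def WCompCompactH2 (u φ : ℂ → ℂ) : Prop :=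
  WCompBddH2 u φ ∧
  ∀ f : ℕ → ℂ → ℂ, (∀ k, MemH2 (f k) ∧ h2NormSq (f k) ≤ 1) →
    ∃ (κ : ℕ → ℕ) (g : ℂ → ℂ), StrictMono κ ∧ MemH2 g ∧
      Tendsto (fun i => h2NormSq fun z => u z * f (κ i) (φ z) - g z) atTop (nhds 0)

/-- The weighted composition operator `W_{u,φ}` is Hilbert–Schmidt on `H²`
(sum over the orthonormal basis `{z^k}` of `H²`). -/
def WCompHSH2 (u φ : ℂ → ℂ) : Prop :=
  WCompBddH2 u φ ∧ Summable fun k : ℕ => h2NormSq fun z => u z * φ z ^ k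

/-- The function `u = (a₁ ∘ φ) · ∏_{j ≥ p} (φ − φ(ξⱼ))^{mⱼ} / a₁`, where `Λ j = φ(ξ j)`
are the non-tangential limits of `φ` at the zeros of the mate. -/
def ufun {n : ℕ} (p : ℕ) (ξ : Fin n → ℂ) (m : Fin n → ℕ) (Λ : Fin n → ℂ)
    (φ : ℂ → ℂ) : ℂ → ℂ :=
  fun z => a1fun ξ m (φ z) *
    (∏ j ∈ Finset.univ.filter fun j : Fin n => p ≤ (j : ℕ), (φ z - Λ j) ^ (m j)) /
      a1fun ξ m z

/-- The reproducing kernel of the de Branges–Rovnyak space `H(c)`: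
`k_λ^c(z) = (1 − conj(c(λ)) c(z)) / (1 − conj(λ) z)`, as a function of the parameter `λ`
and the evaluation point `z`. -/
def rkKernel (c : ℂ → ℂ) (lam z : ℂ) : ℂ :=
  (1 - (starRingEnd ℂ) (c lam) * c z) / (1 - (starRingEnd ℂ) lam * z)

/-- `f` belongs to the reproducing kernel Hilbert space `H(c)` with squared norm at
most `t`: for all finite linear combinations of kernels,
`|⟨f, Σ αᵢ k_{λᵢ}⟩|² ≤ t · ‖Σ αᵢ k_{λᵢ}‖²`. -/
def HbRKBound (c f : ℂ → ℂ) (t : ℝ) : Prop :=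
  ∀ (k : ℕ) (lam α : Fin k → ℂ), (∀ i, lam i ∈ unitDisk) →
    ‖∑ i, (starRingEnd ℂ) (α i) * f (lam i)‖ ^ 2 ≤
      t * (∑ i, ∑ j, α i * (starRingEnd ℂ) (α j) * rkKernel c (lam i) (lam j)).re

/-- Membership in the de Branges–Rovnyak space `H(c)` (general RKHS definition). -/
def MemHbRK (c f : ℂ → ℂ) : Prop := ∃ t : ℝ, HbRKBound c f t

/-- `φ` has an angular derivative in the sense of Carathéodory at `ξ`:
`φ` and `φ'` have non-tangential limits at `ξ` and `|φ(ξ)| = 1`. -/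
def HasADC (φ : ℂ → ℂ) (ξ : ℂ) : Prop :=
  ∃ L L' : ℂ, ‖L‖ = 1 ∧ NTLimit φ ξ L ∧ NTLimit (deriv φ) ξ L'

/-- The measure `μ_{u,φ}(E) = ∫_{φ⁻¹(E) ∩ T} |u|² dm` (boundary values on the circle,
normalized Lebesgue measure). -/
def muMeas (u φ : ℂ → ℂ) (E : Set ℂ) : ENNReal :=
  (ENNReal.ofReal (2 * Real.pi))⁻¹ *
    ∫⁻ θ in Set.Ioc (0:ℝ) (2 * Real.pi),
      (if bdryVal φ (Complex.exp (θ * Complex.I)) ∈ E then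
        ENNReal.ofReal (‖bdryVal u (Complex.exp (θ * Complex.I))‖ ^ 2) else 0)

/-- `μ_{u,φ}` is a Carleson measure: `μ(S(ζ,r)) ≤ M r` for all Carleson windows
`S(ζ,r) = {z : |z| ≤ 1, |z − ζ| ≤ r}`, `ζ ∈ T`, `0 < r < 1`. -/
def IsCarleson (u φ : ℂ → ℂ) : Prop :=
  ∃ M : ℝ, 0 < M ∧ ∀ ζ ∈ unitCircle, ∀ r ∈ Set.Ioo (0:ℝ) 1,
    muMeas u φ (Metric.closedBall ζ r ∩ Metric.closedBall 0 1) ≤ ENNReal.ofReal (M * r)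

/-- `μ_{u,φ}` is a vanishing Carleson measure: `sup_{ζ∈T} μ(S(ζ,r))/r → 0` as `r → 0`. -/
def IsVanishingCarleson (u φ : ℂ → ℂ) : Prop :=
  ∀ ε > (0:ℝ), ∃ r₀ ∈ Set.Ioo (0:ℝ) 1, ∀ r ∈ Set.Ioo (0:ℝ) r₀, ∀ ζ ∈ unitCircle,
    muMeas u φ (Metric.closedBall ζ r ∩ Metric.closedBall 0 1) ≤ ENNReal.ofReal (ε * r)

/-- The reproducing kernel integral
`∫_T (1 − |w|²) |u(ξ)|² / |1 − conj(w) φ(ξ)|² dm(ξ)`. -/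
def repKerInt (u φ : ℂ → ℂ) (w : ℂ) : ENNReal :=
  (ENNReal.ofReal (2 * Real.pi))⁻¹ *
    ∫⁻ θ in Set.Ioc (0:ℝ) (2 * Real.pi),
      ENNReal.ofReal ((1 - ‖w‖ ^ 2) * ‖bdryVal u (Complex.exp (θ * Complex.I))‖ ^ 2 /
        ‖1 - (starRingEnd ℂ) w * bdryVal φ (Complex.exp (θ * Complex.I))‖ ^ 2)
section Helpers

lemma mem_unitDisk {z : ℂ} : z ∈ unitDisk ↔ ‖z‖ < 1 := mem_ball_zero_iff

lemma taylor_hasSum {f : ℂ → ℂ} (hf : DifferentiableOn ℂ f unitDisk) {z : ℂ}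
    (hz : z ∈ unitDisk) : HasSum (fun k => taylorCoeff f k * z ^ k) (f z) := by
  have h := Complex.hasSum_taylorSeries_on_ball hf hz
  have he : (fun n : ℕ => (n.factorial : ℂ)⁻¹ • (z - 0) ^ n • iteratedDeriv n f 0)
      = fun k => taylorCoeff f k * z ^ k := by
    funext k
    simp only [taylorCoeff, smul_eq_mul, sub_zero, div_eq_mul_inv]
    ring
  rwa [he] at h

lemma h2NormSq_nonneg (f : ℂ → ℂ) : 0 ≤ h2NormSq f :=
  tsum_nonneg fun _ => by positivity

lemma memH2_growth {f : ℂ → ℂ} (hf : MemH2 f) {z : ℂ} (hz : z ∈ unitDisk) :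
    ‖f z‖ ≤ Real.sqrt (h2NormSq f) / Real.sqrt (1 - ‖z‖ ^ 2) := by
  obtain ⟨hdiff, hsum⟩ := hf
  have hz1 : ‖z‖ < 1 := mem_unitDisk.mp hz
  have hz0 : (0:ℝ) ≤ ‖z‖ := norm_nonneg z
  have hx2 : ‖z‖ ^ 2 < 1 := by nlinarith
  have hx2' : (0:ℝ) < 1 - ‖z‖ ^ 2 := by linarith
  set c : ℕ → ℝ := fun k => ‖taylorCoeff f k‖ with hc
  have hcnn : ∀ k, 0 ≤ c k := fun k => norm_nonneg _
  have hgeom : Summable fun k : ℕ => (‖z‖ ^ 2) ^ k :=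
    summable_geometric_of_lt_one (by positivity) hx2
  -- summability of the term series
  have hterm : Summable fun k : ℕ => c k * ‖z‖ ^ k := by
    have h1 : Summable fun k : ℕ => ‖z‖ ^ k :=
      summable_geometric_of_lt_one hz0 hz1
    have h2 : Summable fun k : ℕ => c k ^ 2 * ‖z‖ ^ k :=
      Summable.of_nonneg_of_le (fun k => by positivity)
        (fun k => by
          have : ‖z‖ ^ k ≤ 1 := pow_le_one₀ hz0 hz1.le
          nlinarith [sq_nonneg (c k)]) hsum
    refine Summable.of_nonneg_of_le (fun k => by positivity) (fun k => ?_) (h1.add h2)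
    rcases le_or_gt (c k) 1 with h | h
    · have : c k * ‖z‖ ^ k ≤ 1 * ‖z‖ ^ k := by
        apply mul_le_mul_of_nonneg_right h (by positivity)
      simp only [one_mul] at this
      have h3 : (0:ℝ) ≤ c k ^ 2 * ‖z‖ ^ k := by positivity
      linarith
    · have : c k ≤ c k ^ 2 := by nlinarith
      have h4 : c k * ‖z‖ ^ k ≤ c k ^ 2 * ‖z‖ ^ k :=
        mul_le_mul_of_nonneg_right this (by positivity)
      have h5 : (0:ℝ) ≤ ‖z‖ ^ k := by positivity
      linarith
  -- pointwise: ‖f z‖ ≤ ∑' c k ‖z‖^k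
  have hS := taylor_hasSum hdiff hz
  have hnorm : ‖f z‖ ≤ ∑' k, c k * ‖z‖ ^ k := by
    rw [← hS.tsum_eq]
    refine (norm_tsum_le_tsum_norm ?_).trans_eq ?_
    · convert hterm using 2 with k
      rw [norm_mul, norm_pow]
    · congr 1; funext k; rw [norm_mul, norm_pow]
  refine hnorm.trans ?_
  -- Cauchy–Schwarz for each partial sum
  refine Summable.tsum_le_of_sum_le hterm fun s => ?_
  have hCS := Finset.sum_mul_sq_le_sq_mul_sq s c (fun k => ‖z‖ ^ k)
  have hA : ∑ k ∈ s, c k ^ 2 ≤ h2NormSq f :=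
    Summable.sum_le_tsum s (fun k _ => by positivity) hsum
  have hB : ∑ k ∈ s, (‖z‖ ^ k) ^ 2 ≤ (1 - ‖z‖ ^ 2)⁻¹ := by
    have : ∀ k : ℕ, (‖z‖ ^ k) ^ 2 = (‖z‖ ^ 2) ^ k := fun k => by
      rw [← pow_mul, ← pow_mul, Nat.mul_comm]
    calc ∑ k ∈ s, (‖z‖ ^ k) ^ 2 = ∑ k ∈ s, (‖z‖ ^ 2) ^ k := by
          exact Finset.sum_congr rfl fun k _ => this k
      _ ≤ ∑' k, (‖z‖ ^ 2) ^ k := Summable.sum_le_tsum s (fun k _ => by positivity) hgeom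
      _ = (1 - ‖z‖ ^ 2)⁻¹ := tsum_geometric_of_lt_one (by positivity) hx2
  have hsnn : (0:ℝ) ≤ ∑ k ∈ s, c k * ‖z‖ ^ k :=
    Finset.sum_nonneg fun k _ => by positivity
  have hsq : (∑ k ∈ s, c k * ‖z‖ ^ k) ^ 2 ≤ h2NormSq f * (1 - ‖z‖ ^ 2)⁻¹ := by
    refine hCS.trans ?_
    have h0 : (0:ℝ) ≤ ∑ k ∈ s, (‖z‖ ^ k) ^ 2 :=
      Finset.sum_nonneg fun k _ => by positivity
    have h1 : (0:ℝ) ≤ h2NormSq f := h2NormSq_nonneg f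
    exact mul_le_mul hA hB h0 h1
  have := Real.sqrt_le_sqrt hsq
  rw [Real.sqrt_sq hsnn] at this
  refine this.trans ?_
  rw [Real.sqrt_mul (h2NormSq_nonneg f), Real.sqrt_inv, div_eq_mul_inv]

end Helpers
section PolyLemmas

lemma iteratedDeriv_polyEval (q : Polynomial ℂ) (k : ℕ) (x : ℂ) :
    iteratedDeriv k (fun z => q.eval z) x = (Polynomial.derivative^[k] q).eval x := by
  induction k generalizing q x with
  | zero => simp
  | succ k ih =>
    rw [iteratedDeriv_succ']
    have hder : deriv (fun z => q.eval z) = fun z => q.derivative.eval z :=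
      funext fun y => Polynomial.deriv q
    rw [hder, ih, Function.iterate_succ_apply]

lemma taylorCoeff_polyEval (q : Polynomial ℂ) (k : ℕ) :
    taylorCoeff (fun z => q.eval z) k = q.coeff k := by
  rw [taylorCoeff, iteratedDeriv_polyEval, ← Polynomial.coeff_zero_eq_eval_zero,
    Polynomial.coeff_iterate_derivative, Nat.zero_add, Nat.descFactorial_self,
    nsmul_eq_mul]
  rw [mul_comm, mul_div_assoc, div_self, mul_one]
  exact_mod_cast Nat.factorial_ne_zero k

lemma memH2_polyEval (q : Polynomial ℂ) : MemH2 fun z => q.eval z := by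
  refine ⟨(q.differentiable).differentiableOn, ?_⟩
  refine summable_of_ne_finset_zero (s := Finset.range (q.natDegree + 1)) fun k hk => ?_
  rw [taylorCoeff_polyEval, Polynomial.coeff_eq_zero_of_natDegree_lt, norm_zero]
  · norm_num
  · simpa using Finset.mem_range.not.mp hk

lemma poly_eval_bound {q : Polynomial ℂ} {N : ℕ} (hq : q.degree < (N : WithBot ℕ))
    {z : ℂ} (hz : ‖z‖ ≤ 1) :
    ‖q.eval z‖ ≤ Real.sqrt N * Real.sqrt (h2NormSq fun w => q.eval w) := by
  rcases eq_or_ne q 0 with rfl | hq0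
  · simp only [Polynomial.eval_zero, norm_zero]
    positivity
  have hnd : q.natDegree < N := (Polynomial.natDegree_lt_iff_degree_lt hq0).mpr hq
  have heval := Polynomial.eval_eq_sum_range' hnd z
  have h1 : ‖q.eval z‖ ≤ ∑ k ∈ Finset.range N, ‖q.coeff k‖ := by
    rw [heval]
    refine (norm_sum_le _ _).trans ?_
    refine Finset.sum_le_sum fun k _ => ?_
    rw [norm_mul, norm_pow]
    have : ‖z‖ ^ k ≤ 1 := pow_le_one₀ (norm_nonneg z) hz
    nlinarith [norm_nonneg (q.coeff k)]
  refine h1.trans ?_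
  have hCS := Finset.sum_mul_sq_le_sq_mul_sq (Finset.range N)
    (fun k => ‖q.coeff k‖) (fun _ => (1:ℝ))
  simp only [mul_one, one_pow, Finset.sum_const, Finset.card_range, nsmul_eq_mul] at hCS
  have hA : ∑ k ∈ Finset.range N, ‖q.coeff k‖ ^ 2 ≤ h2NormSq fun w => q.eval w := by
    have hsum := (memH2_polyEval q).2
    have : ∀ k : ℕ, ‖q.coeff k‖ ^ 2 = ‖taylorCoeff (fun w => q.eval w) k‖ ^ 2 := fun k => by
      rw [taylorCoeff_polyEval]
    calc ∑ k ∈ Finset.range N, ‖q.coeff k‖ ^ 2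
        = ∑ k ∈ Finset.range N, ‖taylorCoeff (fun w => q.eval w) k‖ ^ 2 :=
          Finset.sum_congr rfl fun k _ => this k
      _ ≤ _ := Summable.sum_le_tsum _ (fun k _ => by positivity) hsum
  have hnn : (0:ℝ) ≤ ∑ k ∈ Finset.range N, ‖q.coeff k‖ :=
    Finset.sum_nonneg fun k _ => norm_nonneg _
  have hsq : (∑ k ∈ Finset.range N, ‖q.coeff k‖) ^ 2 ≤
      (h2NormSq fun w => q.eval w) * N := by
    refine hCS.trans ?_
    refine mul_le_mul_of_nonneg_right hA (by positivity) |>.trans ?_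
    rw [mul_comm]
  have := Real.sqrt_le_sqrt hsq
  rw [Real.sqrt_sq hnn] at this
  refine this.trans ?_
  rw [Real.sqrt_mul (h2NormSq_nonneg _), mul_comm]

lemma h2NormSq_polyZero : h2NormSq (fun z => (0:Polynomial ℂ).eval z) = 0 := by
  have : ∀ k : ℕ, ‖taylorCoeff (fun z => (0:Polynomial ℂ).eval z) k‖ ^ 2 = 0 := fun k => by
    rw [taylorCoeff_polyEval]; simp
  simp only [h2NormSq, this, tsum_zero]

end PolyLemmas
section A1Lemmas

variable {n : ℕ} {ξ : Fin n → ℂ} {m : Fin n → ℕ}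

lemma a1fun_ne_zero (hξ : ∀ i, ξ i ∈ unitCircle) {z : ℂ} (hz : z ∈ unitDisk) :
    a1fun ξ m z ≠ 0 := by
  refine Finset.prod_ne_zero_iff.mpr fun i _ => ?_
  refine pow_ne_zero _ fun h => ?_
  have h1 : ‖ξ i‖ = 1 := mem_sphere_zero_iff_norm.mp (hξ i)
  have h2 : ‖z‖ < 1 := mem_unitDisk.mp hz
  rw [sub_eq_zero] at h
  rw [h, h1] at h2
  exact lt_irrefl _ h2

lemma a1fun_continuous : Continuous (a1fun ξ m) := by
  refine continuous_finset_prod _ fun i _ => ?_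
  exact (continuous_id.sub continuous_const).pow _

lemma stolz_subset {ξ0 : ℂ} {M : ℝ} : stolzAngle ξ0 M ⊆ unitDisk := fun _ hz => hz.1

lemma stolz_neBot {ξ0 : ℂ} (hξ : ‖ξ0‖ = 1) {M : ℝ} (hM : 1 ≤ M) :
    (nhdsWithin ξ0 (stolzAngle ξ0 M)).NeBot := by
  refine mem_closure_iff_nhdsWithin_neBot.mp ?_
  rw [Metric.mem_closure_iff]
  intro ε hε
  set t : ℝ := 1 - min ε 1 / 2 with ht
  have htmin : 0 < min ε 1 := lt_min hε one_pos
  have hmin1 : min ε 1 ≤ 1 := min_le_right _ _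
  have ht0 : 0 ≤ t := by simp only [ht]; linarith
  have ht1 : t < 1 := by simp only [ht]; linarith
  refine ⟨(t:ℂ) * ξ0, ?_, ?_⟩
  · have hna : ‖(t:ℂ) * ξ0‖ = t := by
      rw [norm_mul, Complex.norm_real, hξ, mul_one, Real.norm_eq_abs, _root_.abs_of_nonneg ht0]
    refine ⟨mem_unitDisk.mpr (by rw [hna]; exact ht1), ?_⟩
    have hd : ‖(t:ℂ) * ξ0 - ξ0‖ = 1 - t := by
      have : (t:ℂ) * ξ0 - ξ0 = ((t:ℝ) - 1 : ℂ) * ξ0 := by push_cast; ring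
      rw [this, norm_mul, hξ, mul_one]
      rw [show ((t:ℝ) - 1 : ℂ) = (((t - 1 : ℝ)):ℂ) by push_cast; ring, Complex.norm_real,
        Real.norm_eq_abs, _root_.abs_of_nonpos (by linarith), neg_sub]
    rw [hd, hna]
    nlinarith
  · have : ξ0 - (t:ℂ) * ξ0 = ((1 - t : ℝ) : ℂ) * ξ0 := by push_cast; ring
    rw [dist_eq_norm, this, norm_mul, Complex.norm_real, hξ, mul_one,
      Real.norm_eq_abs, _root_.abs_of_nonneg (by linarith)]
    simp only [ht]
    have := min_le_left ε 1
    linarith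

lemma prod_erase_bound (hξ : ∀ i, ξ i ∈ unitCircle) (j : Fin n) {z : ℂ} (hz : ‖z‖ ≤ 1) :
    ‖∏ i ∈ Finset.univ.erase j, (z - ξ i) ^ (m i)‖ ≤ 2 ^ (∑ i, m i) := by
  rw [norm_prod]
  have hb : ∀ i ∈ Finset.univ.erase j, ‖(z - ξ i) ^ (m i)‖ ≤ 2 ^ (m i) := by
    intro i _
    rw [norm_pow]
    refine pow_le_pow_left₀ (norm_nonneg _) ?_ _
    calc ‖z - ξ i‖ ≤ ‖z‖ + ‖ξ i‖ := norm_sub_le _ _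
      _ ≤ 1 + 1 := by
          rw [mem_sphere_zero_iff_norm.mp (hξ i)]
          linarith
      _ = 2 := by norm_num
  calc ∏ i ∈ Finset.univ.erase j, ‖(z - ξ i) ^ (m i)‖
      ≤ ∏ i ∈ Finset.univ.erase j, (2:ℝ) ^ (m i) :=
        Finset.prod_le_prod (fun i _ => norm_nonneg _) hb
    _ = 2 ^ (∑ i ∈ Finset.univ.erase j, m i) := by
        rw [← Finset.prod_pow_eq_pow_sum]
    _ ≤ 2 ^ (∑ i, m i) := by
        refine pow_le_pow_right₀ one_le_two ?_
        exact Finset.sum_le_sum_of_subset (Finset.subset_univ _)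

lemma a1fun_stolz_bound (hξ : ∀ i, ξ i ∈ unitCircle) {j : Fin n} (hmj : 0 < m j)
    {M : ℝ} (hM : 1 ≤ M) {z : ℂ} (hz : z ∈ stolzAngle (ξ j) M) :
    ‖a1fun ξ m z‖ ≤ (2*M) ^ (∑ i, m i) * (1 - ‖z‖) := by
  set N := ∑ i, m i with hN
  have hx : ‖z‖ < 1 := mem_unitDisk.mp hz.1
  have h1x : (0:ℝ) ≤ 1 - ‖z‖ := by linarith
  have hsplit : a1fun ξ m z = (z - ξ j) ^ (m j) * ∏ i ∈ Finset.univ.erase j, (z - ξ i) ^ (m i) :=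
    (Finset.mul_prod_erase Finset.univ _ (Finset.mem_univ j)).symm
  rw [hsplit, norm_mul]
  have h1 : ‖(z - ξ j) ^ (m j)‖ ≤ M ^ N * (1 - ‖z‖) := by
    rw [norm_pow]
    calc ‖z - ξ j‖ ^ (m j) ≤ (M * (1 - ‖z‖)) ^ (m j) :=
          pow_le_pow_left₀ (norm_nonneg _) hz.2 _
      _ = M ^ (m j) * (1 - ‖z‖) ^ (m j) := mul_pow _ _ _
      _ ≤ M ^ N * (1 - ‖z‖) ^ 1 := by
          refine mul_le_mul ?_ ?_ (by positivity) (by positivity)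
          · exact pow_le_pow_right₀ hM (Finset.single_le_sum (fun i _ => Nat.zero_le _)
              (Finset.mem_univ j))
          · exact pow_le_pow_of_le_one h1x (by linarith [norm_nonneg z]) hmj
      _ = M ^ N * (1 - ‖z‖) := by rw [pow_one]
  have h2 : ‖∏ i ∈ Finset.univ.erase j, (z - ξ i) ^ (m i)‖ ≤ 2 ^ N :=
    prod_erase_bound hξ j hx.le
  calc ‖(z - ξ j) ^ (m j)‖ * ‖∏ i ∈ Finset.univ.erase j, (z - ξ i) ^ (m i)‖
      ≤ (M ^ N * (1 - ‖z‖)) * 2 ^ N := by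
        refine mul_le_mul h1 h2 (norm_nonneg _) (by positivity)
    _ = (2*M) ^ N * (1 - ‖z‖) := by rw [mul_pow]; ring

end A1Lemmas
section DecompLemmas

variable {n : ℕ} {ξ : Fin n → ℂ} {m : Fin n → ℕ}

lemma decomp_sub_poly_bound (hξ : ∀ i, ξ i ∈ unitCircle) {j : Fin n} (hmj : 0 < m j)
    {F g : ℂ → ℂ} {q : Polynomial ℂ} (hd : HbDecompOf ξ m F g q)
    {M : ℝ} (hM : 1 ≤ M) {z : ℂ} (hz : z ∈ stolzAngle (ξ j) M) :
    ‖F z - q.eval z‖ ≤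
      (2*M) ^ (∑ i, m i) * Real.sqrt (h2NormSq g) * Real.sqrt (1 - ‖z‖) := by
  obtain ⟨hg, hqdeg, heq⟩ := hd
  have hzD : z ∈ unitDisk := hz.1
  have hx : ‖z‖ < 1 := mem_unitDisk.mp hzD
  have hx0 : (0:ℝ) ≤ ‖z‖ := norm_nonneg z
  have h1x : (0:ℝ) < 1 - ‖z‖ := by linarith
  have h1x2 : (0:ℝ) < 1 - ‖z‖ ^ 2 := by nlinarith
  have hFz : F z - q.eval z = a1fun ξ m z * g z := by rw [heq z hzD]; ring
  rw [hFz, norm_mul]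
  set C : ℝ := (2*M) ^ (∑ i, m i) with hC
  have hC0 : (0:ℝ) ≤ C := by positivity
  set A : ℝ := Real.sqrt (h2NormSq g) with hA
  have hA0 : (0:ℝ) ≤ A := Real.sqrt_nonneg _
  have ha1 : ‖a1fun ξ m z‖ ≤ C * (1 - ‖z‖) := a1fun_stolz_bound hξ hmj hM hz
  have hgz : ‖g z‖ ≤ A / Real.sqrt (1 - ‖z‖ ^ 2) := memH2_growth hg hzD
  have hsq : Real.sqrt (1 - ‖z‖) ≤ Real.sqrt (1 - ‖z‖ ^ 2) :=
    Real.sqrt_le_sqrt (by nlinarith)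
  have hsqpos : 0 < Real.sqrt (1 - ‖z‖) := Real.sqrt_pos.mpr h1x
  calc ‖a1fun ξ m z‖ * ‖g z‖ ≤ (C * (1 - ‖z‖)) * (A / Real.sqrt (1 - ‖z‖ ^ 2)) :=
        mul_le_mul ha1 hgz (norm_nonneg _) (by positivity)
    _ ≤ (C * (1 - ‖z‖)) * (A / Real.sqrt (1 - ‖z‖)) := by
        refine mul_le_mul_of_nonneg_left ?_ (by positivity)
        exact div_le_div_of_nonneg_left hA0 hsqpos hsq
    _ = C * A * ((1 - ‖z‖) / Real.sqrt (1 - ‖z‖)) := by ring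
    _ = C * A * Real.sqrt (1 - ‖z‖) := by rw [Real.div_sqrt]

lemma ntlimit_of_decomp (hξ : ∀ i, ξ i ∈ unitCircle) {j : Fin n} (hmj : 0 < m j)
    {F g : ℂ → ℂ} {q : Polynomial ℂ} (hd : HbDecompOf ξ m F g q) :
    NTLimit F (ξ j) (q.eval (ξ j)) := by
  intro M hM
  set s := stolzAngle (ξ j) M with hs
  have hξj : ‖ξ j‖ = 1 := mem_sphere_zero_iff_norm.mp (hξ j)
  set K : ℝ := (2*M) ^ (∑ i, m i) * Real.sqrt (h2NormSq g) with hK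
  have hbd : Tendsto (fun z : ℂ => K * Real.sqrt (1 - ‖z‖)) (nhdsWithin (ξ j) s)
      (nhds 0) := by
    have hcont : Continuous fun z : ℂ => K * Real.sqrt (1 - ‖z‖) :=
      continuous_const.mul (Real.continuous_sqrt.comp (continuous_const.sub continuous_norm))
    have h2 : Tendsto (fun z : ℂ => K * Real.sqrt (1 - ‖z‖)) (nhdsWithin (ξ j) s)
        (nhds (K * Real.sqrt (1 - ‖ξ j‖))) :=
      (hcont.tendsto (ξ j)).mono_left nhdsWithin_le_nhds
    simpa [hξj] using h2
  have hkey : Tendsto (fun z => F z - q.eval z) (nhdsWithin (ξ j) s) (nhds 0) := by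
    refine squeeze_zero_norm' ?_ hbd
    filter_upwards [self_mem_nhdsWithin] with z hz
    exact decomp_sub_poly_bound hξ hmj hd hM.le hz
  have hq : Tendsto (fun z : ℂ => q.eval z) (nhdsWithin (ξ j) s) (nhds (q.eval (ξ j))) :=
    ((q.continuous).tendsto (ξ j)).mono_left (nhdsWithin_le_nhds (s := s))
  have := hkey.add hq
  simpa using this

end DecompLemmas
section Uniqueness

variable {n : ℕ} {ξ : Fin n → ℂ} {m : Fin n → ℕ}

lemma taylorCoeff_congr {f g : ℂ → ℂ} (h : ∀ z ∈ unitDisk, f z = g z) (k : ℕ) :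
    taylorCoeff f k = taylorCoeff g k := by
  have hmem : unitDisk ∈ nhds (0:ℂ) := Metric.ball_mem_nhds 0 one_pos
  have hev : f =ᶠ[nhds (0:ℂ)] g := Filter.eventuallyEq_of_mem hmem h
  rw [taylorCoeff, taylorCoeff, hev.iteratedDeriv_eq]

lemma h2NormSq_congr {f g : ℂ → ℂ} (h : ∀ z ∈ unitDisk, f z = g z) :
    h2NormSq f = h2NormSq g := by
  simp only [h2NormSq]
  congr 1
  funext k
  rw [taylorCoeff_congr h]

open Polynomial in
lemma decomp_poly_eq (hξ : ∀ i, ξ i ∈ unitCircle) (hinj : Function.Injective ξ)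
    (hm : ∀ i, 0 < m i)
    {F g g' : ℂ → ℂ} {q q' : Polynomial ℂ}
    (h1 : HbDecompOf ξ m F g q) (h2 : HbDecompOf ξ m F g' q') :
    q = q' := by
  obtain ⟨hg, hqdeg, heq⟩ := h1
  obtain ⟨hg', hqdeg', heq'⟩ := h2
  by_contra hne
  set N := ∑ i, m i with hNdef
  set p : Polynomial ℂ := q' - q with hp
  have hpne : p ≠ 0 := sub_ne_zero.mpr (Ne.symm hne)
  have hpdeg : p.degree < (N : WithBot ℕ) := by
    exact lt_of_le_of_lt (Polynomial.degree_sub_le q' q) (max_lt hqdeg' hqdeg)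
  have hid : ∀ z ∈ unitDisk, a1fun ξ m z * (g z - g' z) = p.eval z := by
    intro z hz
    have e1 := heq z hz
    have e2 := heq' z hz
    simp only [hp, Polynomial.eval_sub]
    rw [mul_sub]
    linear_combination e2 - e1
  -- there is j with small root multiplicity
  have hexists : ∃ j, p.rootMultiplicity (ξ j) < m j := by
    by_contra hall
    push_neg at hall
    have hdvd : ∀ j, ((X : Polynomial ℂ) - C (ξ j)) ^ (m j) ∣ p := fun j =>
      dvd_trans (pow_dvd_pow _ (hall j)) (Polynomial.pow_rootMultiplicity_dvd p (ξ j))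
    have hcop : Set.Pairwise ↑(Finset.univ : Finset (Fin n))
        (Function.onFun IsCoprime fun j => ((X : Polynomial ℂ) - C (ξ j)) ^ (m j)) := by
      intro i _ j _ hij
      exact ((Polynomial.pairwise_coprime_X_sub_C hinj) hij).pow
    have hprod : (∏ j, ((X : Polynomial ℂ) - C (ξ j)) ^ (m j)) ∣ p :=
      Finset.prod_dvd_of_coprime hcop fun j _ => hdvd j
    have hQdeg : (∏ j, ((X : Polynomial ℂ) - C (ξ j)) ^ (m j)).natDegree = N := by
      rw [Polynomial.natDegree_prod]
      · simp [Polynomial.natDegree_pow, Polynomial.natDegree_X_sub_C, hNdef]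
      · intro i _
        exact pow_ne_zero _ (Polynomial.X_sub_C_ne_zero (ξ i))
    have hle := Polynomial.natDegree_le_of_dvd hprod hpne
    rw [hQdeg] at hle
    have hlt : p.natDegree < N := (Polynomial.natDegree_lt_iff_degree_lt hpne).mpr hpdeg
    omega
  obtain ⟨j, hj⟩ := hexists
  set s0 := p.rootMultiplicity (ξ j) with hs0
  set pt := p /ₘ (((X:Polynomial ℂ) - C (ξ j)) ^ s0) with hptdef
  have hkey : ((X:Polynomial ℂ) - C (ξ j)) ^ s0 * pt = p :=
    Polynomial.pow_mul_divByMonic_rootMultiplicity_eq p (ξ j)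
  have hptne : pt.eval (ξ j) ≠ 0 :=
    Polynomial.eval_divByMonic_pow_rootMultiplicity_ne_zero (ξ j) hpne
  have hξj : ‖ξ j‖ = 1 := mem_sphere_zero_iff_norm.mp (hξ j)
  set G : ℝ := Real.sqrt (h2NormSq g) + Real.sqrt (h2NormSq g') with hGdef
  have hG0 : 0 ≤ G := by positivity
  have hmain : ∀ t : ℝ, 0 ≤ t → t < 1 →
      ‖pt.eval ((t:ℂ) * ξ j)‖ ≤ 2 ^ N * G * Real.sqrt (1 - t) := by
    intro t ht0 ht1
    set z : ℂ := (t:ℂ) * ξ j with hzdef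
    have hznorm : ‖z‖ = t := by
      rw [hzdef, norm_mul, Complex.norm_real, hξj, mul_one, Real.norm_eq_abs,
        _root_.abs_of_nonneg ht0]
    have hzD : z ∈ unitDisk := mem_unitDisk.mpr (by rw [hznorm]; exact ht1)
    have hzsub : z - ξ j = ((t - 1 : ℝ):ℂ) * ξ j := by rw [hzdef]; push_cast; ring
    have hξjne : ξ j ≠ 0 := by
      intro h; rw [h, norm_zero] at hξj; norm_num at hξj
    have hzsubne : z - ξ j ≠ 0 := by
      rw [hzsub]
      refine mul_ne_zero ?_ hξjne
      simp only [ne_eq, Complex.ofReal_eq_zero]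
      intro h; rw [sub_eq_zero] at h; linarith [h]
    have hzsubnorm : ‖z - ξ j‖ = 1 - t := by
      rw [hzsub, norm_mul, Complex.norm_real, hξj, mul_one, Real.norm_eq_abs,
        _root_.abs_of_nonpos (by linarith), neg_sub]
    have hidz := hid z hzD
    have hsplit : a1fun ξ m z =
        (z - ξ j) ^ (m j) * ∏ i ∈ Finset.univ.erase j, (z - ξ i) ^ (m i) :=
      (Finset.mul_prod_erase Finset.univ _ (Finset.mem_univ j)).symm
    have hpz : p.eval z = (z - ξ j) ^ s0 * pt.eval z := by
      conv_lhs => rw [← hkey]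
      simp [Polynomial.eval_mul, Polynomial.eval_pow]
    have hpow : (z - ξ j) ^ (m j) = (z - ξ j) ^ s0 * (z - ξ j) ^ (m j - s0) := by
      rw [← pow_add]
      congr 1
      omega
    have hcancel : (z - ξ j) ^ (m j - s0) *
        ((∏ i ∈ Finset.univ.erase j, (z - ξ i) ^ (m i)) * (g z - g' z)) = pt.eval z := by
      have hne : (z - ξ j) ^ s0 ≠ 0 := pow_ne_zero _ hzsubne
      apply mul_left_cancel₀ hne
      rw [← hpz, ← hidz, hsplit, hpow]
      ring
    rw [← hcancel, norm_mul, norm_mul]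
    have hb1 : ‖(z - ξ j) ^ (m j - s0)‖ ≤ 1 - t := by
      rw [norm_pow, hzsubnorm]
      calc (1 - t) ^ (m j - s0) ≤ (1 - t) ^ 1 :=
            pow_le_pow_of_le_one (by linarith) (by linarith) (by omega)
        _ = 1 - t := pow_one _
    have hb2 : ‖∏ i ∈ Finset.univ.erase j, (z - ξ i) ^ (m i)‖ ≤ 2 ^ N :=
      prod_erase_bound hξ j (by rw [hznorm]; linarith)
    have ht2 : (0:ℝ) < 1 - t ^ 2 := by nlinarith
    have hb3 : ‖g z - g' z‖ ≤ G / Real.sqrt (1 - t ^ 2) := by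
      have hgz := memH2_growth hg hzD
      have hgz' := memH2_growth hg' hzD
      rw [hznorm] at hgz hgz'
      calc ‖g z - g' z‖ ≤ ‖g z‖ + ‖g' z‖ := norm_sub_le _ _
        _ ≤ Real.sqrt (h2NormSq g) / Real.sqrt (1 - t ^ 2) +
            Real.sqrt (h2NormSq g') / Real.sqrt (1 - t ^ 2) := add_le_add hgz hgz'
        _ = G / Real.sqrt (1 - t ^ 2) := by rw [hGdef, add_div]
    have hsq : Real.sqrt (1 - t) ≤ Real.sqrt (1 - t ^ 2) :=
      Real.sqrt_le_sqrt (by nlinarith)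
    have hsqpos : 0 < Real.sqrt (1 - t) := Real.sqrt_pos.mpr (by linarith)
    calc ‖(z - ξ j) ^ (m j - s0)‖ *
          (‖∏ i ∈ Finset.univ.erase j, (z - ξ i) ^ (m i)‖ * ‖g z - g' z‖)
        ≤ (1 - t) * (2 ^ N * (G / Real.sqrt (1 - t ^ 2))) := by
          refine mul_le_mul hb1 ?_ (by positivity) (by linarith)
          exact mul_le_mul hb2 hb3 (norm_nonneg _) (by positivity)
      _ ≤ (1 - t) * (2 ^ N * (G / Real.sqrt (1 - t))) := by
          refine mul_le_mul_of_nonneg_left ?_ (by linarith)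
          refine mul_le_mul_of_nonneg_left ?_ (by positivity)
          exact div_le_div_of_nonneg_left hG0 hsqpos hsq
      _ = 2 ^ N * G * ((1 - t) / Real.sqrt (1 - t)) := by ring
      _ = 2 ^ N * G * Real.sqrt (1 - t) := by rw [Real.div_sqrt]
  -- take the limit t → 1⁻ along a sequence
  set tk : ℕ → ℝ := fun k => 1 - 1/(k+1) with htkdef
  have htk0 : ∀ k : ℕ, 0 ≤ tk k := by
    intro k
    have : 1/((k:ℝ)+1) ≤ 1 := by
      rw [div_le_one (by positivity)]
      linarith [Nat.cast_nonneg (α := ℝ) k]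
    simp only [htkdef]; linarith
  have htk1 : ∀ k : ℕ, tk k < 1 := by
    intro k
    have : 0 < 1/((k:ℝ)+1) := by positivity
    simp only [htkdef]; linarith
  have hlim1 : Tendsto tk atTop (nhds 1) := by
    have h0 : Tendsto (fun k : ℕ => 1/((k:ℝ)+1)) atTop (nhds 0) :=
      tendsto_one_div_add_atTop_nhds_zero_nat
    have := (tendsto_const_nhds (x := (1:ℝ)) (f := atTop (α := ℕ))).sub h0
    simpa [htkdef, one_div] using this
  have hlimL : Tendsto (fun k => ‖pt.eval ((tk k : ℂ) * ξ j)‖) atTop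
      (nhds ‖pt.eval (ξ j)‖) := by
    have hc : Continuous fun w : ℂ => ‖pt.eval w‖ := (pt.continuous).norm
    have hzt : Tendsto (fun k => ((tk k : ℝ) : ℂ) * ξ j) atTop (nhds (ξ j)) := by
      have h1 : Tendsto (fun k => ((tk k : ℝ) : ℂ)) atTop (nhds (1:ℂ)) :=
        (Complex.continuous_ofReal.tendsto 1).comp hlim1
      have := h1.mul (tendsto_const_nhds (x := ξ j))
      simpa using this
    exact (hc.tendsto _).comp hzt
  have hlimR : Tendsto (fun k => 2 ^ N * G * Real.sqrt (1 - tk k)) atTop (nhds 0) := by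
    have h1 : Tendsto (fun k => 1 - tk k) atTop (nhds 0) := by
      have := (tendsto_const_nhds (x := (1:ℝ)) (f := atTop (α := ℕ))).sub hlim1
      simpa using this
    have h2 : Tendsto (fun k => Real.sqrt (1 - tk k)) atTop (nhds 0) := by
      have := (Real.continuous_sqrt.tendsto 0).comp h1
      simpa [Function.comp_def] using this
    have := h2.const_mul (2 ^ N * G)
    simpa using this
  have hle : ‖pt.eval (ξ j)‖ ≤ 0 :=
    le_of_tendsto_of_tendsto' hlimL hlimR (fun k => hmain (tk k) (htk0 k) (htk1 k))
  exact hptne (norm_le_zero_iff.mp hle)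

lemma hbNormSq_eq_of_decomp (hξ : ∀ i, ξ i ∈ unitCircle) (hinj : Function.Injective ξ)
    (hm : ∀ i, 0 < m i) {F g : ℂ → ℂ} {q : Polynomial ℂ} (hd : HbDecompOf ξ m F g q) :
    hbNormSq ξ m F = h2NormSq g + h2NormSq (fun z => q.eval z) := by
  have hmem : MemHb ξ m F := ⟨(g, q), hd⟩
  have hchoice : HbDecompOf ξ m F (hbDecomp ξ m F).1 (hbDecomp ξ m F).2 := by
    rw [hbDecomp, dif_pos hmem]
    exact hmem.choose_spec
  have hq : (hbDecomp ξ m F).2 = q := decomp_poly_eq hξ hinj hm hchoice hd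
  have hgeq : ∀ z ∈ unitDisk, (hbDecomp ξ m F).1 z = g z := by
    intro z hz
    have e1 := hchoice.2.2 z hz
    have e2 := hd.2.2 z hz
    rw [hq] at e1
    have ha := a1fun_ne_zero (m := m) hξ hz
    have hmul : a1fun ξ m z * (hbDecomp ξ m F).1 z = a1fun ξ m z * g z := by
      linear_combination e2 - e1
    exact mul_left_cancel₀ ha hmul
  rw [hbNormSq, h2NormSq_congr hgeq, hq]

end Uniqueness
section IdMem

variable {n : ℕ} {ξ : Fin n → ℂ} {m : Fin n → ℕ}

lemma memHb_id (hξ : ∀ i, ξ i ∈ unitCircle) (hm : ∀ i, 0 < m i) (j : Fin n) :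
    MemHb ξ m (fun w : ℂ => w) := by
  have hN1 : 1 ≤ ∑ i, m i :=
    le_trans (hm j) (Finset.single_le_sum (fun i _ => Nat.zero_le _) (Finset.mem_univ j))
  rcases Nat.lt_or_ge 1 (∑ i, m i) with hN2 | hNle
  · refine ⟨(fun z => (0:Polynomial ℂ).eval z, Polynomial.X), memH2_polyEval 0, ?_, ?_⟩
    · rw [Polynomial.degree_X]
      exact_mod_cast hN2
    · intro z _
      simp
  · have hNeq : (∑ i, m i) = 1 := le_antisymm hNle hN1
    have hmj : m j = 1 := le_antisymm
      (hNeq ▸ Finset.single_le_sum (fun i _ => Nat.zero_le _) (Finset.mem_univ j)) (hm j)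
    have huniv : ∀ i : Fin n, i = j := by
      intro i
      by_contra hij
      have hsub : ({i, j} : Finset (Fin n)).sum m ≤ ∑ i, m i :=
        Finset.sum_le_sum_of_subset (Finset.subset_univ _)
      rw [Finset.sum_insert (by simp [hij]), Finset.sum_singleton] at hsub
      have h1 := hm i
      have h2 := hm j
      omega
    have ha1 : ∀ z : ℂ, a1fun ξ m z = z - ξ j := by
      intro z
      rw [a1fun]
      have huu : (Finset.univ : Finset (Fin n)) = {j} :=
        Finset.eq_singleton_iff_unique_mem.mpr ⟨Finset.mem_univ j, fun i _ => huniv i⟩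
      rw [huu, Finset.prod_singleton, hmj, pow_one]
    refine ⟨(fun z => (1:Polynomial ℂ).eval z, Polynomial.C (ξ j)),
      memH2_polyEval 1, ?_, ?_⟩
    · calc (Polynomial.C (ξ j)).degree ≤ 0 := Polynomial.degree_C_le
        _ < ((∑ i, m i : ℕ) : WithBot ℕ) := by
          rw [hNeq]
          exact_mod_cast Nat.zero_lt_one
    · intro z _
      rw [ha1]
      simp only [Polynomial.eval_one, mul_one, Polynomial.eval_C]
      ring

end IdMem


/-- Theorem 3.5. If `C_φ` is bounded on `H(b)`, then for every `j`,
the non-tangential limit `φ(ξⱼ)` belongs to `D ∪ Z_T(a)`. -/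
theorem boundary_limits_constrained
    (b a : ℂ → ℂ) (n : ℕ) (ξ : Fin n → ℂ) (m : Fin n → ℕ)
    (hset : RationalSetting b a n ξ m)
    (φ : ℂ → ℂ) (hφd : DifferentiableOn ℂ φ unitDisk)
    (hφmap : ∀ z ∈ unitDisk, φ z ∈ unitDisk)
    (hbdd : CompBddHb ξ m φ) :
    ∀ j, ∃ L, NTLimit φ (ξ j) L ∧ (L ∈ unitDisk ∨ ∃ i, L = ξ i) := by
  intro j
  obtain ⟨hmap, C0, hC0⟩ := hbdd
  have hξc : ∀ i, ξ i ∈ unitCircle := hset.zeros_mem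
  have hinj := hset.zeros_inj
  have hm := hset.mult_pos
  have hξj : ‖ξ j‖ = 1 := mem_sphere_zero_iff_norm.mp (hξc j)
  obtain ⟨gq, hdφ⟩ := hmap _ (memHb_id hξc hm j)
  set L := gq.2.eval (ξ j) with hLdef
  have hNT : NTLimit φ (ξ j) L := ntlimit_of_decomp hξc (hm j) hdφ
  refine ⟨L, hNT, ?_⟩
  by_cases hL1 : ‖L‖ < 1
  · exact Or.inl (mem_unitDisk.mpr hL1)
  by_cases hLξ : ∃ i, L = ξ i
  · exact Or.inr hLξ
  exfalso
  push_neg at hLξ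
  have hneB : (nhdsWithin (ξ j) (stolzAngle (ξ j) 2)).NeBot := stolz_neBot hξj one_le_two
  have hφlim : Tendsto φ (nhdsWithin (ξ j) (stolzAngle (ξ j) 2)) (nhds L) := hNT 2 one_lt_two
  -- ‖L‖ = 1
  have hLle : ‖L‖ ≤ 1 := by
    have hnlim : Tendsto (fun z => ‖φ z‖) (nhdsWithin (ξ j) (stolzAngle (ξ j) 2))
        (nhds ‖L‖) := (continuous_norm.tendsto L).comp hφlim
    refine le_of_tendsto hnlim ?_
    filter_upwards [self_mem_nhdsWithin] with z hz
    exact (mem_unitDisk.mp (hφmap z hz.1)).le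
  have hLeq : ‖L‖ = 1 := le_antisymm hLle (not_lt.mp hL1)
  -- a1fun is bounded below near L
  have ha1L : a1fun ξ m L ≠ 0 := by
    refine Finset.prod_ne_zero_iff.mpr fun i _ => pow_ne_zero _ ?_
    exact sub_ne_zero.mpr (hLξ i)
  set δ := ‖a1fun ξ m L‖ with hδdef
  have hδ0 : 0 < δ := norm_pos_iff.mpr ha1L
  obtain ⟨ε, hε0, hεball⟩ : ∃ ε > 0, ∀ w : ℂ, ‖w - L‖ < ε → δ/2 ≤ ‖a1fun ξ m w‖ := by
    obtain ⟨ε, hε0, h⟩ := Metric.continuousAt_iff.mp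
      ((a1fun_continuous (ξ := ξ) (m := m)).continuousAt (x := L)) (δ/2) (by linarith)
    refine ⟨ε, hε0, fun w hw => ?_⟩
    have hd := h (show dist w L < ε by rwa [dist_eq_norm])
    rw [dist_eq_norm] at hd
    have habs := abs_norm_sub_norm_le (a1fun ξ m w) (a1fun ξ m L)
    rw [abs_le] at habs
    have := habs.1
    have hlt : ‖a1fun ξ m w - a1fun ξ m L‖ < δ/2 := hd
    simp only [← hδdef] at this ⊢
    linarith
  set N := ∑ i, m i with hNdef
  set C1 : ℝ := max C0 1 with hC1def
  have hC11 : (1:ℝ) ≤ C1 := le_max_right _ _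
  have hC10 : (0:ℝ) ≤ C1 := le_trans zero_le_one hC11
  set K0 : ℝ := 4 ^ N + Real.sqrt N with hK0def
  have hK00 : 0 < K0 := by positivity
  -- main estimate
  have hKmain : ∀ K : ℕ, 1 ≤ K →
      δ/2 * ((K:ℝ)/2) ≤ K0 * Real.sqrt (C1 * K) := by
    intro K hK1
    have hKpos : (0:ℝ) < K := by exact_mod_cast hK1
    -- the test function
    set qK : Polynomial ℂ :=
      ∑ k ∈ Finset.range K, Polynomial.C (((starRingEnd ℂ) L)^k) * Polynomial.X^k with hqKdef
    have hcoeffK : ∀ i : ℕ, qK.coeff i =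
        if i < K then ((starRingEnd ℂ) L)^i else 0 := by
      intro i
      rw [hqKdef, Polynomial.finset_sum_coeff]
      simp only [Polynomial.coeff_C_mul, Polynomial.coeff_X_pow, mul_ite, mul_one, mul_zero]
      rw [Finset.sum_ite_eq (Finset.range K) i]
      simp [Finset.mem_range]
    have hLconj : ‖(starRingEnd ℂ) L‖ = 1 := by
      rw [RCLike.norm_conj, hLeq]
    have hh2K : h2NormSq (fun z => qK.eval z) = K := by
      rw [h2NormSq]
      have hterm : ∀ k : ℕ, ‖taylorCoeff (fun z => qK.eval z) k‖ ^ 2 =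
          if k < K then 1 else 0 := by
        intro k
        rw [taylorCoeff_polyEval, hcoeffK]
        split_ifs with h
        · rw [norm_pow, hLconj, one_pow, one_pow]
        · simp
      rw [tsum_eq_sum (s := Finset.range K) (fun k hk => by
        rw [hterm, if_neg (Finset.mem_range.not.mp hk)])]
      have hone : ∀ k ∈ Finset.range K, ‖taylorCoeff (fun z => qK.eval z) k‖ ^ 2 = 1 :=
        fun k hk => by rw [hterm, if_pos (Finset.mem_range.mp hk)]
      rw [Finset.sum_congr rfl hone]
      simp
    have hqKL : qK.eval L = (K:ℂ) := by
      rw [hqKdef]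
      rw [Polynomial.eval_finset_sum]
      have hterm : ∀ k ∈ Finset.range K,
          (Polynomial.C (((starRingEnd ℂ) L)^k) * Polynomial.X^k).eval L = 1 := by
        intro k _
        simp only [Polynomial.eval_mul, Polynomial.eval_C, Polynomial.eval_pow,
          Polynomial.eval_X]
        rw [← mul_pow]
        have h1 : (starRingEnd ℂ) L * L = 1 := by
          rw [mul_comm, Complex.mul_conj]
          norm_cast
          rw [Complex.normSq_eq_norm_sq, hLeq]
          norm_num
        rw [h1, one_pow]
      rw [Finset.sum_congr rfl hterm]
      simp
    -- lower bound near L for qK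
    obtain ⟨ε2, hε20, hε2b⟩ : ∃ ε2 > 0, ∀ w : ℂ, ‖w - L‖ < ε2 →
        (K:ℝ)/2 ≤ ‖qK.eval w‖ := by
      obtain ⟨ε2, hε20, h⟩ := Metric.continuousAt_iff.mp
        ((qK.continuous).continuousAt (x := L)) ((K:ℝ)/2) (by positivity)
      refine ⟨ε2, hε20, fun w hw => ?_⟩
      have hd := h (show dist w L < ε2 by rwa [dist_eq_norm])
      rw [dist_eq_norm, hqKL] at hd
      have habs := abs_norm_sub_norm_le (qK.eval w) ((K:ℂ))
      rw [abs_le] at habs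
      have h1 := habs.1
      have h2 : ‖((K:ℕ):ℂ)‖ = (K:ℝ) := by
        rw [Complex.norm_natCast]
      rw [h2] at h1
      linarith
    -- membership and norm of the test function
    set fK : ℂ → ℂ := fun z => a1fun ξ m z * qK.eval z with hfKdef
    have hdK : HbDecompOf ξ m fK (fun z => qK.eval z) 0 := by
      refine ⟨memH2_polyEval qK, ?_, ?_⟩
      · rw [Polynomial.degree_zero]
        exact_mod_cast WithBot.bot_lt_coe N
      · intro z _
        simp [hfKdef]
    have hmemK : MemHb ξ m fK := ⟨(fun z => qK.eval z, 0), hdK⟩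
    have hnormK : hbNormSq ξ m fK = K := by
      rw [hbNormSq_eq_of_decomp hξc hinj hm hdK, hh2K, h2NormSq_polyZero, add_zero]
    -- composition
    set F : ℂ → ℂ := fun z => fK (φ z) with hFdef
    have hFmem : MemHb ξ m F := hmap _ hmemK
    have hFbound : hbNormSq ξ m F ≤ C1 * K := by
      have := hC0 _ hmemK
      rw [hnormK] at this
      calc hbNormSq ξ m F ≤ C0 * K := this
        _ ≤ C1 * K := by
            refine mul_le_mul_of_nonneg_right (le_max_left _ _) (by positivity)
    set S := hbNormSq ξ m F with hSdef
    have hS0 : 0 ≤ S := by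
      rw [hSdef, hbNormSq]
      exact add_nonneg (h2NormSq_nonneg _) (h2NormSq_nonneg _)
    have hDspec : HbDecompOf ξ m F (hbDecomp ξ m F).1 (hbDecomp ξ m F).2 := by
      rw [hbDecomp, dif_pos hFmem]
      exact hFmem.choose_spec
    have hSsplit : S = h2NormSq (hbDecomp ξ m F).1 +
        h2NormSq (fun z => ((hbDecomp ξ m F).2).eval z) := rfl
    have hG1 : h2NormSq (hbDecomp ξ m F).1 ≤ S := by
      rw [hSsplit]
      exact le_add_of_nonneg_right (h2NormSq_nonneg _)
    have hG2 : h2NormSq (fun z => ((hbDecomp ξ m F).2).eval z) ≤ S := by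
      rw [hSsplit]
      exact le_add_of_nonneg_left (h2NormSq_nonneg _)
    -- pick a point in the Stolz angle where φ is close to L
    have hev : ∀ᶠ z in nhdsWithin (ξ j) (stolzAngle (ξ j) 2),
        ‖φ z - L‖ < min ε ε2 ∧ z ∈ stolzAngle (ξ j) 2 := by
      refine Filter.Eventually.and ?_ self_mem_nhdsWithin
      have := Metric.tendsto_nhds.mp hφlim (min ε ε2) (lt_min hε0 hε20)
      filter_upwards [this] with z hz
      rwa [dist_eq_norm] at hz
    obtain ⟨zs, hzs1, hzs2⟩ := hev.exists
    have hzsD : zs ∈ unitDisk := hzs2.1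
    have hzsn : ‖zs‖ < 1 := mem_unitDisk.mp hzsD
    -- lower bound for ‖F zs‖
    have hlow : δ/2 * ((K:ℝ)/2) ≤ ‖F zs‖ := by
      have h1 : δ/2 ≤ ‖a1fun ξ m (φ zs)‖ :=
        hεball _ (lt_of_lt_of_le hzs1 (min_le_left _ _))
      have h2 : (K:ℝ)/2 ≤ ‖qK.eval (φ zs)‖ :=
        hε2b _ (lt_of_lt_of_le hzs1 (min_le_right _ _))
      have : F zs = a1fun ξ m (φ zs) * qK.eval (φ zs) := rfl
      rw [this, norm_mul]
      exact mul_le_mul h1 h2 (by positivity) (norm_nonneg _)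
    -- upper bound for ‖F zs‖
    have hup : ‖F zs‖ ≤ K0 * Real.sqrt S := by
      have hsub := decomp_sub_poly_bound hξc (hm j) hDspec (M := 2) one_le_two hzs2
      have hQdeg := hDspec.2.1
      have hpolyb := poly_eval_bound (N := N) hQdeg (z := zs) hzsn.le
      have hsq1 : Real.sqrt (1 - ‖zs‖) ≤ 1 :=
        Real.sqrt_le_one.mpr (by linarith [norm_nonneg zs])
      have hsqS1 : Real.sqrt (h2NormSq (hbDecomp ξ m F).1) ≤ Real.sqrt S :=
        Real.sqrt_le_sqrt hG1
      have hsqS2 : Real.sqrt (h2NormSq (fun z => ((hbDecomp ξ m F).2).eval z)) ≤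
          Real.sqrt S := Real.sqrt_le_sqrt hG2
      have h44 : ((2:ℝ)*2) ^ N = 4 ^ N := by norm_num
      calc ‖F zs‖ ≤ ‖F zs - ((hbDecomp ξ m F).2).eval zs‖ +
            ‖((hbDecomp ξ m F).2).eval zs‖ := by
            conv_lhs => rw [show F zs = (F zs - ((hbDecomp ξ m F).2).eval zs) +
              ((hbDecomp ξ m F).2).eval zs by ring]
            exact norm_add_le _ _
        _ ≤ (2*2) ^ N * Real.sqrt (h2NormSq (hbDecomp ξ m F).1) * Real.sqrt (1 - ‖zs‖) +
            Real.sqrt N * Real.sqrt (h2NormSq (fun z => ((hbDecomp ξ m F).2).eval z)) :=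
            add_le_add hsub hpolyb
        _ ≤ 4 ^ N * Real.sqrt S * 1 + Real.sqrt N * Real.sqrt S := by
            rw [h44]
            refine add_le_add ?_ ?_
            · refine mul_le_mul (mul_le_mul_of_nonneg_left hsqS1 (by positivity)) hsq1
                (Real.sqrt_nonneg _) (by positivity)
            · exact mul_le_mul_of_nonneg_left hsqS2 (Real.sqrt_nonneg _)
        _ = K0 * Real.sqrt S := by rw [hK0def]; ring
    have hSC : Real.sqrt S ≤ Real.sqrt (C1 * K) := Real.sqrt_le_sqrt hFbound
    calc δ/2 * ((K:ℝ)/2) ≤ ‖F zs‖ := hlow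
      _ ≤ K0 * Real.sqrt S := hup
      _ ≤ K0 * Real.sqrt (C1 * K) := mul_le_mul_of_nonneg_left hSC hK00.le
  -- derive contradiction from hKmain
  set B : ℝ := 4 * K0 * Real.sqrt C1 / δ with hBdef
  have hB0 : 0 ≤ B := by positivity
  set K : ℕ := ⌈B^2⌉₊ + 1 with hKdef
  have hK1 : 1 ≤ K := Nat.le_add_left 1 _
  have hBK : B < Real.sqrt K := by
    rw [show (K:ℝ) = (⌈B^2⌉₊ : ℝ) + 1 by rw [hKdef]; push_cast; ring]
    have h1 : B^2 ≤ (⌈B^2⌉₊ : ℝ) := Nat.le_ceil _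
    have h2 : B^2 < (⌈B^2⌉₊ : ℝ) + 1 := by linarith
    calc B = Real.sqrt (B^2) := (Real.sqrt_sq hB0).symm
      _ < Real.sqrt ((⌈B^2⌉₊ : ℝ) + 1) := by
          refine Real.sqrt_lt_sqrt (by positivity) h2
  have hest := hKmain K hK1
  have hKpos : (0:ℝ) < K := by exact_mod_cast hK1
  have hKsqrt : (K:ℝ) = Real.sqrt K * Real.sqrt K := (Real.mul_self_sqrt hKpos.le).symm
  have hCK : Real.sqrt (C1 * K) = Real.sqrt C1 * Real.sqrt K := Real.sqrt_mul hC10 _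
  have hsqK : 0 < Real.sqrt K := Real.sqrt_pos.mpr hKpos
  have hest2 : δ/2 * ((K:ℝ)/2) ≤ K0 * (Real.sqrt C1 * Real.sqrt K) := by
    rw [← hCK]
    exact hest
  have hfin : Real.sqrt K ≤ B := by
    rw [hBdef, le_div_iff₀ hδ0]
    nth_rewrite 1 [hKsqrt] at hest2
    have h3 : (Real.sqrt (K:ℝ) * δ) * Real.sqrt (K:ℝ) ≤
        (4 * K0 * Real.sqrt C1) * Real.sqrt (K:ℝ) := by
      have hrng : (Real.sqrt (K:ℝ) * δ) * Real.sqrt (K:ℝ) =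
          4 * (δ / 2 * (Real.sqrt (K:ℝ) * Real.sqrt (K:ℝ) / 2)) := by ring
      rw [hrng]
      calc 4 * (δ / 2 * (Real.sqrt (K:ℝ) * Real.sqrt (K:ℝ) / 2))
          ≤ 4 * (K0 * (Real.sqrt C1 * Real.sqrt (K:ℝ))) := by linarith
        _ = (4 * K0 * Real.sqrt C1) * Real.sqrt (K:ℝ) := by ring
    exact le_of_mul_le_mul_right h3 hsqK
  linarith [hBK, hfin]

end
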